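/- Let p, r ∈ ℤ. Then: ∂_0(c^r_p) = c^2_{p-1} if r = 1; ∂_0(c^r_p) = 2c^2_{p-1} if r = 0; ∂_0(c^r_p) = 2c^1_{p-1} - c_{p-1} if r = -1; and ∂_0(c^r_p) = 0 if |r| ≥ 2. In particular ∂_0(c^{-1}_p) = 2a^1_{p-1}, ∂_1(c^{-1}_p) = 2a^0_{p-1}, and (∂_0 + ∂_1)(c^{-1}_p) = 2c^1_{p-1}. -/

import Mathlib

/-!
The polynomial ring `R2 = ℚ[c₁, c₂, …, t₁, t₂, …]`: the variable `Sum.inl p` (for `p ≥ 1`)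
is `c_p`, and `Sum.inr i` (for `i ≥ 1`) is `t_i`.
-/

noncomputable section
open MvPolynomial Finset
open scoped Classical

abbrev R2 : Type := MvPolynomial (ℕ ⊕ ℕ) ℚ

/-- The variable `t_i`. -/
def Tv (i : ℕ) : R2 := X (Sum.inr i)

/-- `c_p`, with the conventions `c_0 = 1` and `c_p = 0` for `p < 0`. -/
def Cv (p : ℤ) : R2 := if p < 0 then 0 else if p = 0 then 1 else X (Sum.inl p.toNat)

/-- The complete homogeneous symmetric polynomial `h_j` evaluated on a list. -/
def hfun : List R2 → ℕ → R2
  | [], j => if j = 0 then 1 else 0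
  | a :: L, j => ∑ i ∈ Finset.range (j + 1), a ^ i * hfun L (j - i)

/-- The elementary symmetric polynomial `e_j` evaluated on a list. -/
def efun : List R2 → ℕ → R2
  | [], j => if j = 0 then 1 else 0
  | _ :: _, 0 => 1
  | a :: L, j + 1 => efun L (j + 1) + a * efun L j

/-- The list `(-t_1, …, -t_r)`. -/
def negT (r : ℕ) : List R2 := (List.range r).map fun i => -Tv (i + 1)

/-- `h^r_j(-t)`: complete homogeneous for `r ≥ 0`, elementary `e^{-r}_j(-t)` for `r < 0`. -/
def hmt (r : ℤ) (j : ℕ) : R2 :=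
  if 0 ≤ r then hfun (negT r.toNat) j else efun (negT (-r).toNat) j

/-- `c^r_p := Σ_{j=0}^p c_{p-j} h^r_j(-t)`. -/
def cc (r p : ℤ) : R2 := ∑ j ∈ Finset.range (p.toNat + 1), Cv (p - j) * hmt r j

/-- `a^s_p := (1/2)c_p + Σ_{j=1}^p c_{p-j} h^s_j(-t)`. -/
def aa (s p : ℤ) : R2 :=
  C (1/2 : ℚ) * Cv p + ∑ j ∈ Finset.Icc 1 p.toNat, Cv (p - j) * hmt s j

/-- Images of the variables under the automorphism `s_i`. -/
def sImg : ℕ → ℕ ⊕ ℕ → R2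
  | 0, Sum.inr j => if j = 1 then -Tv 2 else if j = 2 then -Tv 1 else Tv j
  | 0, Sum.inl p =>
      if p = 0 then X (Sum.inl 0)
      else Cv p - 2 * (Tv 1 + Tv 2) *
        ∑ j ∈ Finset.range p, (-1 : R2) ^ j *
          (∑ a ∈ Finset.range (j + 1), Tv 1 ^ a * Tv 2 ^ (j - a)) * Cv ((p : ℤ) - 1 - j)
  | i + 1, Sum.inr j =>
      if j = i + 1 then Tv (i + 2) else if j = i + 2 then Tv (i + 1) else Tv j
  | _ + 1, Sum.inl p => X (Sum.inl p)

/-- The ring automorphism `s_i` of `R2`. -/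
def sA (i : ℕ) : R2 →ₐ[ℚ] R2 := aeval (sImg i)

/-- The fraction field of `R2`. -/
abbrev KK : Type := FractionRing R2

/-- The canonical embedding of `R2` into its fraction field. -/
def toK : R2 →+* KK := algebraMap R2 KK

/-- The denominator `t_1 + t_2` (for `i = 0`) resp. `t_{i+1} - t_i` (for `i ≥ 1`). -/
def dden (i : ℕ) : R2 := if i = 0 then Tv 1 + Tv 2 else Tv (i + 1) - Tv i

/-- The divided difference operator `∂_i`, with values in the fraction field. -/
def dd (i : ℕ) (f : R2) : KK := (toK f - toK (sA i f)) / toK (dden i)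

namespace Aux

abbrev S : Type := PowerSeries R2
abbrev CC (a : R2) : S := PowerSeries.C (R := R2) a
abbrev Xs : S := PowerSeries.X
abbrev cf (n : ℕ) : S →ₗ[R2] R2 := PowerSeries.coeff (R := R2) n
def Cs : S := PowerSeries.mk fun n => Cv n

lemma hfun_zero (L : List R2) : hfun L 0 = 1 := by
  induction L with
  | nil => simp [hfun]
  | cons a L ih => simp [hfun, ih]

lemma efun_zero (L : List R2) : efun L 0 = 1 := by cases L <;> simp [efun]

lemma hfun_cons (a : R2) (L : List R2) (j : ℕ) :
    hfun (a :: L) j = ∑ i ∈ Finset.range (j + 1), a ^ i * hfun L (j - i) := rfl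

lemma hfun_cons_succ (a : R2) (L : List R2) (n : ℕ) :
    hfun (a :: L) (n+1) = hfun L (n+1) + a * hfun (a :: L) n := by
  rw [hfun_cons a L (n+1), Finset.sum_range_succ', add_comm]
  congr 1
  · simp
  · rw [hfun_cons, Finset.mul_sum]
    refine Finset.sum_congr rfl fun i _ => ?_
    rw [Nat.succ_sub_succ]
    ring

def Hser (L : List R2) : S := PowerSeries.mk (hfun L)
def Eser (L : List R2) : S := PowerSeries.mk (efun L)

lemma coeff_zero_mul_X (a : R2) (F : S) : cf 0 (F * (CC a * Xs)) = 0 := by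
  rw [PowerSeries.coeff_zero_eq_constantCoeff_apply, map_mul, map_mul,
    PowerSeries.constantCoeff_X]
  ring

lemma Hser_step (a : R2) (L : List R2) :
    Hser (a :: L) * (1 - CC a * Xs) = Hser L := by
  refine PowerSeries.ext fun n => ?_
  rw [mul_sub, mul_one, map_sub]
  cases n with
  | zero =>
      simp only [coeff_zero_mul_X, sub_zero, Hser, PowerSeries.coeff_mk, hfun_zero]
  | succ m =>
      rw [show Hser (a::L) * (CC a * Xs) = (Hser (a::L) * CC a) * Xs by ring,
        PowerSeries.coeff_succ_mul_X, PowerSeries.coeff_mul_C]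
      simp only [Hser, PowerSeries.coeff_mk]
      rw [hfun_cons_succ]
      ring

lemma Hser_mul (L : List R2) :
    Hser L * (L.map fun a => 1 - CC a * Xs).prod = 1 := by
  induction L with
  | nil =>
      rw [List.map_nil, List.prod_nil, mul_one]
      refine PowerSeries.ext fun n => ?_
      cases n <;> simp [Hser, hfun, PowerSeries.coeff_one]
  | cons a L ih =>
      rw [List.map_cons, List.prod_cons, ← mul_assoc, Hser_step, ih]

lemma Eser_step (a : R2) (L : List R2) :
    Eser (a :: L) = (1 + CC a * Xs) * Eser L := by
  refine PowerSeries.ext fun n => ?_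
  rw [add_mul, one_mul, map_add, mul_assoc]
  cases n with
  | zero =>
      simp [Eser, efun_zero, PowerSeries.coeff_zero_eq_constantCoeff_apply, map_mul]
  | succ m =>
      rw [PowerSeries.coeff_C_mul, PowerSeries.coeff_succ_X_mul]
      simp only [Eser, PowerSeries.coeff_mk]
      rw [efun]

lemma Eser_mul (L : List R2) :
    Eser L = (L.map fun a => 1 + CC a * Xs).prod := by
  induction L with
  | nil =>
      rw [List.map_nil, List.prod_nil]
      refine PowerSeries.ext fun n => ?_
      cases n <;> simp [Eser, efun, PowerSeries.coeff_one]
  | cons a L ih => rw [List.map_cons, List.prod_cons, Eser_step, ih]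

def piP (r : ℕ) : S := ((List.range r).map fun i => 1 + CC (Tv (i+1)) * Xs).prod
def muM (r : ℕ) : S := ((List.range r).map fun i => 1 - CC (Tv (i+1)) * Xs).prod

lemma Hpos (r : ℕ) : PowerSeries.mk (hmt (r:ℤ)) * piP r = 1 := by
  have h1 : PowerSeries.mk (hmt (r:ℤ)) = Hser (negT r) := by
    refine PowerSeries.ext fun j => ?_
    simp [Hser, hmt]
  have h2 : ((negT r).map fun a => 1 - CC a * Xs)
      = (List.range r).map fun i => 1 + CC (Tv (i+1)) * Xs := by
    rw [negT, List.map_map]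
    refine List.map_congr_left fun i _ => ?_
    simp only [Function.comp_apply, map_neg, neg_mul, sub_neg_eq_add]
  rw [h1, piP, ← h2, Hser_mul]

lemma Hneg (r : ℕ) : PowerSeries.mk (hmt (-((r:ℤ)+1))) = muM (r+1) := by
  have h1 : PowerSeries.mk (hmt (-((r:ℤ)+1))) = Eser (negT (r+1)) := by
    refine PowerSeries.ext fun j => ?_
    simp only [Eser, PowerSeries.coeff_mk]
    rw [hmt, if_neg (by omega), show ((-(-((r:ℤ)+1))).toNat) = r + 1 by omega]
  have h2 : ((negT (r+1)).map fun a => 1 + CC a * Xs)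
      = (List.range (r+1)).map fun i => 1 - CC (Tv (i+1)) * Xs := by
    rw [negT, List.map_map]
    refine List.map_congr_left fun i _ => ?_
    simp only [Function.comp_apply, map_neg, neg_mul, ← sub_eq_add_neg]
  rw [h1, Eser_mul, h2, muM]

lemma cc_coeff (r : ℤ) (n : ℕ) : cc r (n:ℤ) = cf n (Cs * PowerSeries.mk (hmt r)) := by
  rw [PowerSeries.coeff_mul]
  simp only [Cs, PowerSeries.coeff_mk]
  rw [Finset.Nat.sum_antidiagonal_eq_sum_range_succ (fun a b => Cv (a:ℤ) * hmt r b) n,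
    ← Finset.sum_range_reflect (fun k => Cv (k:ℤ) * hmt r (n - k)) (n+1)]
  rw [cc]
  rw [show ((n:ℤ).toNat + 1) = n + 1 by omega]
  refine Finset.sum_congr rfl fun j hj => ?_
  rw [Finset.mem_range] at hj
  have h1 : ((n + 1 - 1 - j : ℕ) : ℤ) = (n : ℤ) - j := by omega
  have h2 : n - (n + 1 - 1 - j) = j := by omega
  rw [h1, h2]

def σ (i : ℕ) : S →+* S := PowerSeries.map (sA i).toRingHom

lemma coeff_σ (i n : ℕ) (F : S) : cf n (σ i F) = sA i (cf n F) := by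
  simp [σ, PowerSeries.coeff_map]

lemma sA_X (i : ℕ) (v : ℕ ⊕ ℕ) : sA i (X v) = sImg i v := by
  unfold sA; exact aeval_X (f := sImg i) v

lemma sA0_T1 : sA 0 (Tv 1) = -Tv 2 := by rw [Tv, sA_X]; simp [sImg]
lemma sA0_T2 : sA 0 (Tv 2) = -Tv 1 := by rw [Tv, sA_X]; simp [sImg]
lemma sA0_T (j : ℕ) (h : 3 ≤ j) : sA 0 (Tv j) = Tv j := by
  rw [Tv, sA_X]; simp only [sImg]
  rw [if_neg (by omega), if_neg (by omega), Tv]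
lemma sA1_T1 : sA 1 (Tv 1) = Tv 2 := by rw [Tv, sA_X]; simp [sImg]
lemma sA1_T2 : sA 1 (Tv 2) = Tv 1 := by rw [Tv, sA_X]; simp [sImg]

lemma sA1_C (m : ℤ) : sA 1 (Cv m) = Cv m := by
  rcases lt_trichotomy m 0 with h | h | h
  · rw [show Cv m = 0 from by simp [Cv, h], map_zero]
  · rw [show Cv m = 1 from by simp [Cv, h], map_one]
  · rw [show Cv m = X (Sum.inl m.toNat) from by simp [Cv, not_lt.2 h.le, h.ne'], sA_X]
    simp [sImg]

lemma hfun_single (b : R2) (m : ℕ) : hfun [b] m = b ^ m := by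
  rw [hfun_cons]
  rw [Finset.sum_eq_single_of_mem m (Finset.self_mem_range_succ m)]
  · simp [hfun]
  · intro i hi hne
    rw [Finset.mem_range] at hi
    rw [show hfun ([] : List R2) (m - i) = if m - i = 0 then 1 else 0 from rfl,
      if_neg (by omega), mul_zero]

lemma hfun_pair (a b : R2) (j : ℕ) :
    hfun [a, b] j = ∑ i ∈ Finset.range (j+1), a ^ i * b ^ (j - i) := by
  rw [hfun_cons]
  exact Finset.sum_congr rfl fun i _ => by rw [hfun_single]

lemma hmt2_eq (j : ℕ) :
    hmt 2 j = (-1:R2)^j * ∑ a ∈ Finset.range (j+1), Tv 1 ^ a * Tv 2 ^ (j - a) := by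
  have hl : negT 2 = [-Tv 1, -Tv 2] := by
    simp [negT, List.range_succ]
  rw [hmt, if_pos (by norm_num), show ((2:ℤ).toNat) = 2 from rfl, hl, hfun_pair,
    Finset.mul_sum]
  refine Finset.sum_congr rfl fun i hi => ?_
  rw [Finset.mem_range] at hi
  have h2 : (-1:R2)^i * (-1:R2)^(j-i) = (-1:R2)^j := by
    rw [← pow_add, show i + (j - i) = j from by omega]
  rw [show (-Tv 1) = (-1 : R2) * Tv 1 from by ring,
    show (-Tv 2) = (-1 : R2) * Tv 2 from by ring, mul_pow, mul_pow,
    mul_mul_mul_comm, h2]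

lemma sA0_C (n : ℕ) : sA 0 (Cv (n:ℤ)) = Cv (n:ℤ) - 2 * (Tv 1 + Tv 2) *
    ∑ j ∈ Finset.range n, (-1:R2)^j *
      (∑ a ∈ Finset.range (j+1), Tv 1 ^ a * Tv 2 ^ (j - a)) * Cv ((n:ℤ) - 1 - j) := by
  cases n with
  | zero =>
      rw [show Cv ((0:ℕ):ℤ) = 1 from by simp [Cv], map_one]
      simp
  | succ m =>
      have hX : Cv ((m+1:ℕ):ℤ) = X (Sum.inl (m+1)) := by
        rw [Cv, if_neg (by omega), if_neg (by omega)]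
        norm_num
      rw [hX, sA_X]
      simp only [sImg]
      rw [if_neg (Nat.succ_ne_zero m), hX]

lemma K0a : σ 0 Cs = Cs - CC (2*(Tv 1 + Tv 2)) * (Xs * (PowerSeries.mk (hmt 2) * Cs)) := by
  refine PowerSeries.ext fun n => ?_
  rw [map_sub, coeff_σ, PowerSeries.coeff_C_mul]
  simp only [Cs, PowerSeries.coeff_mk]
  cases n with
  | zero =>
      rw [PowerSeries.coeff_zero_eq_constantCoeff_apply, map_mul,
        PowerSeries.constantCoeff_X, zero_mul, mul_zero, sub_zero]
      rw [show Cv ((0:ℕ):ℤ) = 1 from by simp [Cv], map_one]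
  | succ m =>
      rw [PowerSeries.coeff_succ_X_mul, PowerSeries.coeff_mul]
      simp only [PowerSeries.coeff_mk, Cs]
      rw [Finset.Nat.sum_antidiagonal_eq_sum_range_succ (fun a b => hmt 2 a * Cv (b:ℤ)) m]
      rw [sA0_C (m+1)]
      congr 1
      rw [Finset.mul_sum, Finset.mul_sum]
      refine Finset.sum_congr rfl fun j hj => ?_
      rw [Finset.mem_range] at hj
      rw [hmt2_eq j, show ((m - j : ℕ) : ℤ) = ((m+1:ℕ):ℤ) - 1 - j from by omega]

lemma σ_CC (i : ℕ) (a : R2) : σ i (CC a) = CC (sA i a) := by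
  unfold σ; rw [PowerSeries.map_C]; rfl

lemma σ_X (i : ℕ) : σ i Xs = Xs := by unfold σ; exact PowerSeries.map_X _

lemma σ0_P1 : σ 0 (1 + CC (Tv 1) * Xs) = 1 - CC (Tv 2) * Xs := by
  rw [map_add, map_one, map_mul, σ_CC, σ_X, sA0_T1, show CC (-Tv 2) = -CC (Tv 2) from map_neg _ _]; ring
lemma σ0_P2 : σ 0 (1 + CC (Tv 2) * Xs) = 1 - CC (Tv 1) * Xs := by
  rw [map_add, map_one, map_mul, σ_CC, σ_X, sA0_T2, show CC (-Tv 1) = -CC (Tv 1) from map_neg _ _]; ring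
lemma σ0_M1 : σ 0 (1 - CC (Tv 1) * Xs) = 1 + CC (Tv 2) * Xs := by
  rw [map_sub, map_one, map_mul, σ_CC, σ_X, sA0_T1, show CC (-Tv 2) = -CC (Tv 2) from map_neg _ _]; ring
lemma σ0_M2 : σ 0 (1 - CC (Tv 2) * Xs) = 1 + CC (Tv 1) * Xs := by
  rw [map_sub, map_one, map_mul, σ_CC, σ_X, sA0_T2, show CC (-Tv 1) = -CC (Tv 1) from map_neg _ _]; ring
lemma σ1_M1 : σ 1 (1 - CC (Tv 1) * Xs) = 1 - CC (Tv 2) * Xs := by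
  rw [map_sub, map_one, map_mul, σ_CC, σ_X, sA1_T1]

lemma σ1_Cs : σ 1 Cs = Cs := by
  refine PowerSeries.ext fun n => ?_
  rw [coeff_σ]
  simp only [Cs, PowerSeries.coeff_mk]
  exact sA1_C _

def piS (k : ℕ) : S := ((List.range k).map fun i => 1 + CC (Tv (i+3)) * Xs).prod
def muS (k : ℕ) : S := ((List.range k).map fun i => 1 - CC (Tv (i+3)) * Xs).prod

lemma range_add_two (k : ℕ) :
    List.range (k+2) = 0 :: 1 :: (List.range k).map (fun i => i + 2) := by
  rw [List.range_succ_eq_map, List.range_succ_eq_map, List.map_cons, List.map_map]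
  refine congrArg _ (congrArg _ (List.map_congr_left fun i _ => ?_))
  simp [Function.comp]

lemma piP_decomp (k : ℕ) :
    piP (k+2) = (1 + CC (Tv 1) * Xs) * ((1 + CC (Tv 2) * Xs) * piS k) := by
  unfold piP piS
  rw [range_add_two, List.map_cons, List.map_cons, List.prod_cons, List.prod_cons,
    List.map_map]
  congr 2

lemma muM_decomp (k : ℕ) :
    muM (k+2) = (1 - CC (Tv 1) * Xs) * ((1 - CC (Tv 2) * Xs) * muS k) := by
  unfold muM muS
  rw [range_add_two, List.map_cons, List.map_cons, List.prod_cons, List.prod_cons,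
    List.map_map]
  congr 2

lemma σ0_piS (k : ℕ) : σ 0 (piS k) = piS k := by
  unfold piS
  rw [map_list_prod, List.map_map]
  refine congrArg _ (List.map_congr_left fun i _ => ?_)
  simp only [Function.comp_apply]
  rw [map_add, map_one, map_mul, σ_CC, σ_X, sA0_T (i+3) (by omega)]

lemma σ0_muS (k : ℕ) : σ 0 (muS k) = muS k := by
  unfold muS
  rw [map_list_prod, List.map_map]
  refine congrArg _ (List.map_congr_left fun i _ => ?_)
  simp only [Function.comp_apply]
  rw [map_sub, map_one, map_mul, σ_CC, σ_X, sA0_T (i+3) (by omega)]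

lemma constantCoeff_piS (k : ℕ) : PowerSeries.constantCoeff (R := R2) (piS k) = 1 := by
  unfold piS
  rw [map_list_prod, List.map_map]
  refine List.prod_eq_one fun x hx => ?_
  rw [List.mem_map] at hx
  obtain ⟨i, -, rfl⟩ := hx
  simp

lemma constantCoeff_muS (k : ℕ) : PowerSeries.constantCoeff (R := R2) (muS k) = 1 := by
  unfold muS
  rw [map_list_prod, List.map_map]
  refine List.prod_eq_one fun x hx => ?_
  rw [List.mem_map] at hx
  obtain ⟨i, -, rfl⟩ := hx
  simp

lemma ne_zero_of_constantCoeff_one {F : S} (h : PowerSeries.constantCoeff (R := R2) F = 1) :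
    F ≠ 0 := by
  intro h0
  rw [h0, map_zero] at h
  exact zero_ne_one h

lemma CC_add (x y : R2) : CC (x + y) = CC x + CC y := map_add _ _ _
lemma CC_sub (x y : R2) : CC (x - y) = CC x - CC y := map_sub _ _ _
lemma CC_mul (x y : R2) : CC (x * y) = CC x * CC y := map_mul _ _ _
lemma CC_two : (CC 2 : S) = 2 := map_ofNat _ 2

lemma hH1 : PowerSeries.mk (hmt 1) * (1 + CC (Tv 1) * Xs) = 1 := by
  have h := Hpos 1
  rw [piP, show List.range 1 = [0] from rfl, List.map_cons, List.map_nil, List.prod_cons,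
    List.prod_nil, mul_one] at h
  simpa using h

lemma hH2 : PowerSeries.mk (hmt 2) * ((1 + CC (Tv 1) * Xs) * (1 + CC (Tv 2) * Xs)) = 1 := by
  have h := Hpos 2
  rw [piP, show List.range 2 = [0, 1] from rfl] at h
  simp only [List.map_cons, List.map_nil, List.prod_cons, List.prod_nil, mul_one] at h
  simpa using h

lemma hH0 : PowerSeries.mk (hmt 0) = 1 := by
  refine PowerSeries.ext fun n => ?_
  rw [PowerSeries.coeff_mk, PowerSeries.coeff_one]
  rw [hmt, if_pos le_rfl, show ((0:ℤ).toNat) = 0 from rfl, show negT 0 = [] from by simp [negT]]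
  rfl

lemma hHm1 : PowerSeries.mk (hmt (-1)) = 1 - CC (Tv 1) * Xs := by
  have h := Hneg 0
  rw [muM, show List.range 1 = [0] from rfl, List.map_cons, List.map_nil, List.prod_cons,
    List.prod_nil, mul_one] at h
  simpa using h

lemma K0 : σ 0 Cs * ((1 + CC (Tv 1) * Xs) * (1 + CC (Tv 2) * Xs)) =
    Cs * ((1 - CC (Tv 1) * Xs) * (1 - CC (Tv 2) * Xs)) := by
  have h2 := hH2
  have e2 : CC (2*(Tv 1 + Tv 2)) = 2 * (CC (Tv 1) + CC (Tv 2)) := by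
    rw [CC_mul, CC_add, CC_two]
  rw [K0a, e2]
  linear_combination (-(2*(CC (Tv 1) + CC (Tv 2)) * Xs * Cs)) * h2

lemma dden0_eq : dden 0 = Tv 1 + Tv 2 := rfl
lemma dden1_eq : dden 1 = Tv 2 - Tv 1 := rfl

lemma Aser : Cs * PowerSeries.mk (hmt 1) - σ 0 (Cs * PowerSeries.mk (hmt 1)) =
    CC (dden 0) * (Xs * (Cs * PowerSeries.mk (hmt 2))) := by
  rw [dden0_eq, CC_add]
  have h1 := hH1
  have h2 := hH2
  have hs1 : σ 0 (PowerSeries.mk (hmt 1)) * (1 - CC (Tv 2) * Xs) = 1 := by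
    have h := congrArg (σ 0) hH1
    rw [map_mul, map_one, σ0_P1] at h
    exact h
  have hK := K0
  rw [map_mul]
  apply mul_right_cancel₀ (b := (1 + CC (Tv 1) * Xs) * ((1 + CC (Tv 2) * Xs) * (1 - CC (Tv 2) * Xs)))
  · apply ne_zero_of_constantCoeff_one
    simp
  · linear_combination (Cs * (1 + CC (Tv 2) * Xs) * (1 - CC (Tv 2) * Xs)) * h1
      - (σ 0 (PowerSeries.mk (hmt 1)) * (1 - CC (Tv 2) * Xs)) * hK
      - (Cs * (1 - CC (Tv 1) * Xs) * (1 - CC (Tv 2) * Xs)) * hs1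
      - ((CC (Tv 1) + CC (Tv 2)) * Xs * Cs * (1 - CC (Tv 2) * Xs)) * h2

lemma Bser : Cs * PowerSeries.mk (hmt 0) - σ 0 (Cs * PowerSeries.mk (hmt 0)) =
    CC (dden 0) * (Xs * (2 * (Cs * PowerSeries.mk (hmt 2)))) := by
  rw [dden0_eq, CC_add, hH0, mul_one]
  have h2 := hH2
  have hK := K0
  apply mul_right_cancel₀ (b := (1 + CC (Tv 1) * Xs) * (1 + CC (Tv 2) * Xs))
  · apply ne_zero_of_constantCoeff_one
    simp
  · linear_combination (-1 : S) * hK - (2*(CC (Tv 1) + CC (Tv 2)) * Xs * Cs) * h2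

lemma Cser : Cs * PowerSeries.mk (hmt (-1)) - σ 0 (Cs * PowerSeries.mk (hmt (-1))) =
    CC (dden 0) * (Xs * (2 * (Cs * PowerSeries.mk (hmt 1)) - Cs)) := by
  rw [dden0_eq, CC_add, hHm1, map_mul, σ0_M1]
  have h1 := hH1
  have hK := K0
  apply mul_right_cancel₀ (b := 1 + CC (Tv 1) * Xs)
  · apply ne_zero_of_constantCoeff_one
    simp
  · linear_combination (-1 : S) * hK - (2*(CC (Tv 1) + CC (Tv 2)) * Xs * Cs) * h1

lemma Eser' : Cs * PowerSeries.mk (hmt (-1)) - σ 1 (Cs * PowerSeries.mk (hmt (-1))) =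
    CC (dden 1) * (Xs * Cs) := by
  rw [dden1_eq, CC_sub, map_mul, σ1_Cs, hHm1, σ1_M1]
  ring

lemma D2 (k : ℕ) : σ 0 (Cs * PowerSeries.mk (hmt ((k:ℤ)+2))) =
    Cs * PowerSeries.mk (hmt ((k:ℤ)+2)) := by
  have hHr : PowerSeries.mk (hmt ((k:ℤ)+2)) *
      ((1 + CC (Tv 1) * Xs) * ((1 + CC (Tv 2) * Xs) * piS k)) = 1 := by
    have h := Hpos (k+2)
    rw [piP_decomp] at h
    push_cast at h ⊢
    exact h
  have hσHr : σ 0 (PowerSeries.mk (hmt ((k:ℤ)+2))) *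
      ((1 - CC (Tv 2) * Xs) * ((1 - CC (Tv 1) * Xs) * piS k)) = 1 := by
    have h := congrArg (σ 0) hHr
    rw [map_mul, map_mul, map_mul, map_one, σ0_P1, σ0_P2, σ0_piS] at h
    exact h
  have hK := K0
  rw [map_mul]
  apply mul_right_cancel₀ (b := (1 + CC (Tv 1) * Xs) * ((1 + CC (Tv 2) * Xs) *
    ((1 - CC (Tv 1) * Xs) * ((1 - CC (Tv 2) * Xs) * piS k))))
  · apply ne_zero_of_constantCoeff_one
    simp [constantCoeff_piS]
  · linear_combination (σ 0 (PowerSeries.mk (hmt ((k:ℤ)+2))) * (1 - CC (Tv 1) * Xs) *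
        (1 - CC (Tv 2) * Xs) * piS k) * hK
      + (Cs * (1 - CC (Tv 1) * Xs) * (1 - CC (Tv 2) * Xs)) * hσHr
      - (Cs * (1 - CC (Tv 1) * Xs) * (1 - CC (Tv 2) * Xs)) * hHr

lemma Dm2 (k : ℕ) : σ 0 (Cs * PowerSeries.mk (hmt (-(k:ℤ)-2))) =
    Cs * PowerSeries.mk (hmt (-(k:ℤ)-2)) := by
  have hHr : PowerSeries.mk (hmt (-(k:ℤ)-2)) =
      (1 - CC (Tv 1) * Xs) * ((1 - CC (Tv 2) * Xs) * muS k) := by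
    rw [show (-(k:ℤ)-2) = -(((k+1:ℕ):ℤ)+1) from by push_cast; ring, Hneg (k+1), muM_decomp]
  have hK := K0
  rw [map_mul, hHr, map_mul, map_mul, σ0_M1, σ0_M2, σ0_muS]
  linear_combination (muS k) * hK

lemma key (i : ℕ) (F G : S) (d : R2)
    (hser : F - σ i F = CC d * (Xs * G)) (n : ℕ) :
    cf n F - sA i (cf n F) = d * (if n = 0 then 0 else cf (n-1) G) := by
  have h := congrArg (cf n) hser
  rw [map_sub, coeff_σ, PowerSeries.coeff_C_mul] at h
  rw [h]
  congr 1
  cases n with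
  | zero =>
      rw [if_pos rfl, PowerSeries.coeff_zero_eq_constantCoeff_apply, map_mul,
        PowerSeries.constantCoeff_X, zero_mul]
  | succ m =>
      rw [PowerSeries.coeff_succ_X_mul, if_neg (Nat.succ_ne_zero m)]
      rfl

lemma Cv_neg {q : ℤ} (hq : q < 0) : Cv q = 0 := by rw [Cv, if_pos hq]

lemma cc_neg (r : ℤ) {q : ℤ} (hq : q < 0) : cc r q = 0 := by
  rw [cc, show q.toNat = 0 from by omega]
  rw [Finset.sum_range_one]
  rw [show Cv (q - (0:ℕ)) = 0 from Cv_neg (by omega), zero_mul]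

lemma hmt_zero (r : ℤ) : hmt r 0 = 1 := by
  rw [hmt]; split_ifs
  · exact hfun_zero _
  · exact efun_zero _

lemma two_C_half : (2 : R2) * C (1/2 : ℚ) = 1 := by
  rw [show (2:R2) = C (2:ℚ) from (map_ofNat _ 2).symm, ← map_mul]
  norm_num

lemma aa1 (q : ℤ) : 2 * aa 1 q = 2 * cc 1 q - Cv q := by
  rw [aa, cc, Finset.sum_range_succ']
  rw [show ∑ j ∈ Finset.Icc 1 q.toNat, Cv (q - j) * hmt 1 j
      = ∑ i ∈ Finset.range q.toNat, Cv (q - (i+1)) * hmt 1 (i+1) from by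
    rw [← Finset.Ico_add_one_right_eq_Icc, Finset.sum_Ico_eq_sum_range]
    rw [show q.toNat + 1 - 1 = q.toNat from rfl]
    exact Finset.sum_congr rfl fun i _ => by rw [Nat.add_comm 1 i]; push_cast; ring_nf]
  rw [hmt_zero]
  push_cast
  rw [mul_one, sub_zero]
  linear_combination (Cv q) * two_C_half

lemma aa0 (q : ℤ) : 2 * aa 0 q = Cv q := by
  rw [aa]
  rw [Finset.sum_eq_zero (fun j hj => ?_), add_zero]
  · linear_combination (Cv q) * two_C_half
  · rw [Finset.mem_Icc] at hj
    rw [show hmt 0 j = hfun (negT 0) j from by rw [hmt]; norm_num,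
      show negT 0 = [] from by simp [negT],
      show hfun [] j = if j = 0 then 1 else 0 from rfl, if_neg (by omega), mul_zero]

lemma dden_ne_zero (i : ℕ) : dden i ≠ 0 := by
  intro h
  have h2 := congrArg (eval fun v => if v = Sum.inr (i+1) then (1:ℚ) else 0) h
  rw [map_zero] at h2
  cases i with
  | zero =>
      rw [dden0_eq, map_add, Tv, Tv, eval_X, eval_X, if_pos rfl,
        if_neg (by simp)] at h2
      norm_num at h2
  | succ j =>
      rw [dden, if_neg (Nat.succ_ne_zero j), map_sub, Tv, Tv, eval_X, eval_X,
        if_pos rfl, if_neg (by simp)] at h2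
      norm_num at h2

lemma toK_dden_ne_zero (i : ℕ) : toK (dden i) ≠ 0 := by
  intro h
  exact dden_ne_zero i ((IsFractionRing.to_map_eq_zero_iff (K := KK)).mp h)

lemma dd_eq {i : ℕ} {f g : R2} (h : f - sA i f = dden i * g) : dd i f = toK g := by
  rw [dd, div_eq_iff (toK_dden_ne_zero i), ← map_sub toK, h, map_mul]
  ring

lemma dd_zero (i : ℕ) : dd i 0 = 0 := by simp [dd]

lemma dd_self {i : ℕ} {f : R2} (h : sA i f = f) : dd i f = 0 := by
  rw [dd, h, sub_self, zero_div]

lemma dd_item (i : ℕ) (r : ℤ) (G : S) (g : ℤ → R2)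
    (hser : Cs * PowerSeries.mk (hmt r) - σ i (Cs * PowerSeries.mk (hmt r))
      = CC (dden i) * (Xs * G))
    (hg : ∀ m : ℕ, cf m G = g (m : ℤ)) (hgneg : ∀ q : ℤ, q < 0 → g q = 0)
    (p : ℤ) : dd i (cc r p) = toK (g (p-1)) := by
  rcases lt_or_ge p 0 with hp | hp
  · rw [cc_neg r hp, dd_zero, hgneg (p-1) (by omega), map_zero]
  · apply dd_eq
    have hn : p = ((p.toNat : ℕ) : ℤ) := by omega
    have hcc : cc r p = cf p.toNat (Cs * PowerSeries.mk (hmt r)) := by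
      have h := cc_coeff r p.toNat
      rw [← hn] at h
      exact h
    rw [hcc, key i _ G (dden i) hser]
    congr 1
    rcases Nat.eq_zero_or_eq_succ_pred p.toNat with h0 | h1
    · rw [h0, if_pos rfl, hgneg (p-1) (by omega)]
    · rw [h1, if_neg (Nat.succ_ne_zero _), Nat.succ_sub_one, hg,
        show ((p.toNat.pred : ℕ) : ℤ) = p - 1 from by rw [Nat.pred_eq_sub_one]; omega]

lemma item1 (p : ℤ) : dd 0 (cc 1 p) = toK (cc 2 (p-1)) :=
  dd_item 0 1 (Cs * PowerSeries.mk (hmt 2)) (fun q => cc 2 q) Aser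
    (fun m => (cc_coeff 2 m).symm) (fun _ hq => cc_neg 2 hq) p

lemma item2 (p : ℤ) : dd 0 (cc 0 p) = toK (2 * cc 2 (p-1)) :=
  dd_item 0 0 (2 * (Cs * PowerSeries.mk (hmt 2))) (fun q => 2 * cc 2 q) Bser
    (fun m => by
      rw [show (2:S) * (Cs * PowerSeries.mk (hmt 2))
          = Cs * PowerSeries.mk (hmt 2) + Cs * PowerSeries.mk (hmt 2) from two_mul _,
        map_add, ← cc_coeff, ← two_mul])
    (fun _ hq => by simp only [cc_neg 2 hq, mul_zero]) p

lemma coeff_Cs (m : ℕ) : cf m Cs = Cv (m:ℤ) := by simp [Cs]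

lemma item3 (p : ℤ) : dd 0 (cc (-1) p) = toK (2 * cc 1 (p-1) - Cv (p-1)) :=
  dd_item 0 (-1) (2 * (Cs * PowerSeries.mk (hmt 1)) - Cs) (fun q => 2 * cc 1 q - Cv q) Cser
    (fun m => by
      rw [map_sub, show (2:S) * (Cs * PowerSeries.mk (hmt 1))
          = Cs * PowerSeries.mk (hmt 1) + Cs * PowerSeries.mk (hmt 1) from two_mul _,
        map_add, ← cc_coeff, ← two_mul, coeff_Cs])
    (fun _ hq => by simp only [cc_neg 1 hq, Cv_neg hq, mul_zero, sub_zero]) p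

lemma item4 (p r : ℤ) (hr : 2 ≤ |r|) : dd 0 (cc r p) = 0 := by
  rcases lt_or_ge p 0 with hp | hp
  · rw [cc_neg r hp]; exact dd_zero 0
  · apply dd_self
    have hn : p = ((p.toNat : ℕ) : ℤ) := by omega
    have hcc : cc r p = cf p.toNat (Cs * PowerSeries.mk (hmt r)) := by
      have h := cc_coeff r p.toNat
      rw [← hn] at h
      exact h
    rw [hcc, ← coeff_σ]
    congr 1
    rcases le_or_gt 2 r with h2 | h2
    · rw [show r = ((r-2).toNat : ℤ) + 2 from by omega]
      exact D2 _
    · have hr2 : r ≤ -2 := by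
        rcases abs_cases r with ⟨h,_⟩|⟨h,_⟩ <;> omega
      rw [show r = -(((-r-2).toNat : ℤ)) - 2 from by omega]
      exact Dm2 _

lemma item6 (p : ℤ) : dd 1 (cc (-1) p) = toK (2 * aa 0 (p-1)) := by
  rw [show (2 * aa 0 (p-1)) = Cv (p-1) from aa0 _]
  exact dd_item 1 (-1) Cs (fun q => Cv q) Eser'
    (fun m => coeff_Cs m) (fun _ hq => Cv_neg hq) p

lemma item5 (p : ℤ) : dd 0 (cc (-1) p) = toK (2 * aa 1 (p-1)) := by
  rw [show (2 * aa 1 (p-1)) = 2 * cc 1 (p-1) - Cv (p-1) from aa1 _]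
  exact item3 p

lemma item7 (p : ℤ) : dd 0 (cc (-1) p) + dd 1 (cc (-1) p) = toK (2 * cc 1 (p-1)) := by
  rw [item5 p, item6 p, ← map_add]
  congr 1
  linear_combination aa1 (p-1) + aa0 (p-1)

end Aux

theorem statement5 (p r : ℤ) :
    (r = 1 → dd 0 (cc r p) = toK (cc 2 (p - 1))) ∧
    (r = 0 → dd 0 (cc r p) = toK (2 * cc 2 (p - 1))) ∧
    (r = -1 → dd 0 (cc r p) = toK (2 * cc 1 (p - 1) - Cv (p - 1))) ∧
    (2 ≤ |r| → dd 0 (cc r p) = 0) ∧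
    dd 0 (cc (-1) p) = toK (2 * aa 1 (p - 1)) ∧
    dd 1 (cc (-1) p) = toK (2 * aa 0 (p - 1)) ∧
    dd 0 (cc (-1) p) + dd 1 (cc (-1) p) = toK (2 * cc 1 (p - 1)) := by
  refine ⟨fun h => ?_, fun h => ?_, fun h => ?_, fun h => Aux.item4 p r h,
    Aux.item5 p, Aux.item6 p, Aux.item7 p⟩
  · subst h; exact Aux.item1 p
  · subst h; exact Aux.item2 p
  · subst h; exact Aux.item3 p
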